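/- Let p > 1 and F_p : ℝ² → ℝ, F_p(ζ) = |ζ|^p. Identify ℝ² with ℂ. For a complex d×d matrix A, any ζ ∈ ℝ²∖{0}, and any ξ ∈ ℂ^d, the generalized Hessian quadratic form satisfies H^A_{F_p}[ζ; V_d(ξ)] = (p²/2)|ζ|^{p-2} Re⟨A e^{-i arg ζ} ξ, I_p(e^{-i arg ζ} ξ)⟩. -/

import Mathlib

open scoped ComplexConjugate
open scoped Topology

noncomputable def Ip (p : ℝ) {d : ℕ} (ξ : EuclideanSpace ℂ (Fin d)) : EuclideanSpace ℂ (Fin d) :=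
  WithLp.toLp 2 (fun i => ξ i + ((1 - 2 / p : ℝ) : ℂ) * conj (ξ i))

noncomputable def mulVecE {d : ℕ} (A : Matrix (Fin d) (Fin d) ℂ)
    (ξ : EuclideanSpace ℂ (Fin d)) : EuclideanSpace ℂ (Fin d) :=
  WithLp.toLp 2 (fun i => ∑ j, A i j * ξ j)

noncomputable def Delta (p : ℝ) {d : ℕ} (A : Matrix (Fin d) (Fin d) ℂ) : ℝ :=
  sInf { r : ℝ | ∃ ξ : EuclideanSpace ℂ (Fin d), ‖ξ‖ = 1 ∧
    r = (@inner ℂ _ _ (mulVecE A ξ) (Ip p ξ)).re }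

/-- The real form `M(A) = [[Re A, −Im A],[Im A, Re A]]` of a complex matrix, as a function on
`(Fin 2 × Fin d) × (Fin 2 × Fin d)`; the first coordinate `0` indexes the "real" block and `1`
the "imaginary" block. -/
noncomputable def realForm {d : ℕ} (A : Matrix (Fin d) (Fin d) ℂ) :
    (Fin 2 × Fin d) → (Fin 2 × Fin d) → ℝ := fun x y =>
  if x.1 = 0 then (if y.1 = 0 then (A x.2 y.2).re else -((A x.2 y.2).im))
  else (if y.1 = 0 then (A x.2 y.2).im else (A x.2 y.2).re)

/-- Entries of the Hessian matrix `D²Φ(ω)` of a function on a Euclidean space. -/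
noncomputable def hessE {ι : Type*} [Fintype ι] [DecidableEq ι]
    (Φ : EuclideanSpace ℝ ι → ℝ) (ω : EuclideanSpace ℝ ι) (i j : ι) : ℝ :=
  iteratedFDeriv ℝ 2 Φ ω ![EuclideanSpace.single i 1, EuclideanSpace.single j 1]

/-- Generalized Hessian quadratic form
`H^{(A₁,…,A_l)}_Φ[ω;X] = ⟨(M(A₁*)⊕⋯⊕M(A_l*))·((D²Φ)(ω)⊗I_{ℝ^d}) X, X⟩`. -/
noncomputable def genHess {l d : ℕ} (A : Fin l → Matrix (Fin d) (Fin d) ℂ)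
    (Φ : EuclideanSpace ℝ (Fin l × Fin 2) → ℝ) (ω : EuclideanSpace ℝ (Fin l × Fin 2))
    (X : Fin l × Fin 2 × Fin d → ℝ) : ℝ :=
  ∑ j, ∑ a, ∑ m, (∑ b, ∑ n, realForm (A j).conjTranspose (a, m) (b, n) *
      (∑ k, ∑ c, hessE Φ ω (j, b) (k, c) * X (k, c, n))) * X (j, a, m)

/-- Generalized Hessian quadratic form for a single matrix (functions on `ℝ²`):
`H^A_Φ[ζ;X] = ⟨M(A*)·((D²Φ)(ζ)⊗I_{ℝ^d}) X, X⟩`. -/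
noncomputable def genHess1 {d : ℕ} (A : Matrix (Fin d) (Fin d) ℂ)
    (Φ : EuclideanSpace ℝ (Fin 2) → ℝ) (ζ : EuclideanSpace ℝ (Fin 2))
    (X : Fin 2 × Fin d → ℝ) : ℝ :=
  ∑ a, ∑ m, (∑ b, ∑ n, realForm A.conjTranspose (a, m) (b, n) *
      (∑ c, hessE Φ ζ b c * X (c, n))) * X (a, m)

/-- The identification `V_d : ℂ^d → ℝ^{2d}`. -/
noncomputable def Vd {d : ℕ} (ξ : EuclideanSpace ℂ (Fin d)) : Fin 2 × Fin d → ℝ :=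
  fun x => if x.1 = 0 then (ξ x.2).re else (ξ x.2).im

section Hess
variable {p : ℝ}

abbrev E2 := EuclideanSpace ℝ (Fin 2)

lemma sq_rpow (w : E2) (q : ℝ) : ((‖w‖^2 : ℝ)) ^ q = ‖w‖ ^ (2*q) := by
  rw [← Real.rpow_natCast ‖w‖ 2, ← Real.rpow_mul (norm_nonneg w)]
  norm_num

lemma key_deriv (w : E2) (hw : w ≠ 0) :
    HasFDerivAt (fun x : E2 => ‖x‖ ^ p) ((p * ‖w‖^(p-2)) • innerSL ℝ w) w := by
  have hfun : (fun x : E2 => ‖x‖ ^ p) = fun x => ((‖x‖^2 : ℝ)) ^ (p/2) := by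
    funext x; rw [sq_rpow]; ring_nf
  have h1 : HasFDerivAt (fun x : E2 => ‖x‖^2) (2 • innerSL ℝ w) w :=
    (hasStrictFDerivAt_norm_sq w).hasFDerivAt
  have h2 : HasDerivAt (fun y : ℝ => y ^ (p/2)) ((p/2) * (‖w‖^2 : ℝ) ^ (p/2 - 1)) (‖w‖^2) :=
    Real.hasDerivAt_rpow_const (Or.inl (pow_ne_zero 2 (norm_ne_zero_iff.mpr hw)))
  have h3 := h2.comp_hasFDerivAt w h1
  rw [hfun]
  refine h3.congr_fderiv ?_
  ext y
  simp only [ContinuousLinearMap.smul_apply, smul_eq_mul, two_smul,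
    ContinuousLinearMap.add_apply]
  rw [sq_rpow, show 2*(p/2-1) = p - 2 by ring]
  ring

noncomputable def rInnerL : E2 →L[ℝ] (E2 →L[ℝ] ℝ) :=
  LinearMap.mkContinuous
    { toFun := fun x => innerSL ℝ x,
      map_add' := by intro x y; ext z; simp [inner_add_left],
      map_smul' := by intro c x; ext z; simp [inner_smul_left] }
    1 (fun x => by simp [innerSL_apply_norm])

@[simp] lemma rInnerL_apply (x y : E2) : rInnerL x y = inner ℝ x y := rfl

lemma hessF (hp : 1 < p) (ζ : E2) (hζ : ζ ≠ 0) (b c : Fin 2) :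
    hessE (fun w => ‖w‖ ^ p) ζ b c =
      p*(p-2)*‖ζ‖^(p-4)*(ζ b)*(ζ c) + p*‖ζ‖^(p-2)*(if b = c then 1 else 0) := by
  have hζn : ‖ζ‖ ≠ 0 := norm_ne_zero_iff.mpr hζ
  have hc : HasFDerivAt (fun x : E2 => p * ‖x‖^(p-2))
      ((p*(p-2)*‖ζ‖^(p-4)) • innerSL ℝ ζ) ζ := by
    have hfun : (fun x : E2 => p * ‖x‖^(p-2)) = fun x => p * ((‖x‖^2 : ℝ)) ^ ((p-2)/2) := by
      funext x; rw [sq_rpow]; ring_nf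
    have h1 : HasFDerivAt (fun x : E2 => ‖x‖^2) (2 • innerSL ℝ ζ) ζ :=
      (hasStrictFDerivAt_norm_sq ζ).hasFDerivAt
    have h2 : HasDerivAt (fun y : ℝ => y ^ ((p-2)/2))
        (((p-2)/2) * (‖ζ‖^2 : ℝ) ^ ((p-2)/2 - 1)) (‖ζ‖^2) :=
      Real.hasDerivAt_rpow_const (Or.inl (pow_ne_zero 2 hζn))
    have h3 := ((h2.comp_hasFDerivAt ζ h1).const_mul p)
    rw [hfun]
    refine h3.congr_fderiv ?_
    ext y
    simp only [ContinuousLinearMap.smul_apply, smul_eq_mul, two_smul,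
      ContinuousLinearMap.add_apply]
    rw [sq_rpow, show 2*((p-2)/2-1) = p - 4 by ring]
    ring
  have hG : HasFDerivAt (fun x : E2 => (p * ‖x‖^(p-2)) • innerSL ℝ x)
      ((p * ‖ζ‖^(p-2)) • rInnerL +
        ((p*(p-2)*‖ζ‖^(p-4)) • innerSL ℝ ζ).smulRight (innerSL ℝ ζ)) ζ := by
    have : (fun x : E2 => innerSL ℝ x) = ⇑rInnerL := rfl
    exact hc.smul (this ▸ rInnerL.hasFDerivAt)
  have heq : fderiv ℝ (fun x : E2 => ‖x‖^p) =ᶠ[𝓝 ζ]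
      (fun x => (p * ‖x‖^(p-2)) • innerSL ℝ x) := by
    filter_upwards [isOpen_compl_singleton.mem_nhds hζ] with w hw
    exact (key_deriv w hw).fderiv
  rw [hessE, iteratedFDeriv_two_apply]
  rw [show (![EuclideanSpace.single b (1:ℝ), EuclideanSpace.single c 1] : Fin 2 → E2) 0
      = EuclideanSpace.single b 1 from rfl,
    show (![EuclideanSpace.single b (1:ℝ), EuclideanSpace.single c 1] : Fin 2 → E2) 1
      = EuclideanSpace.single c 1 from rfl]
  rw [heq.fderiv_eq, hG.fderiv]
  simp only [ContinuousLinearMap.add_apply, ContinuousLinearMap.smul_apply,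
    ContinuousLinearMap.smulRight_apply, innerSL_apply_apply, smul_eq_mul, rInnerL_apply]
  simp only [EuclideanSpace.inner_single_left, EuclideanSpace.inner_single_right,
    map_one, one_mul, conj_trivial, EuclideanSpace.single_apply]
  rcases eq_or_ne b c with h | h
  · simp [h]; ring
  · simp [h, Ne.symm h]

end Hess


/-- `H^A_{F_p}[ζ; V_d(ξ)] = (p²/2)|ζ|^{p-2} Re⟨A e^{-i arg ζ}ξ, I_p(e^{-i arg ζ}ξ)⟩`. -/
theorem stmt6 {d : ℕ} (p : ℝ) (hp : 1 < p) (A : Matrix (Fin d) (Fin d) ℂ)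
    (ζ : EuclideanSpace ℝ (Fin 2)) (hζ : ζ ≠ 0) (ξ : EuclideanSpace ℂ (Fin d)) :
    genHess1 A (fun w => ‖w‖ ^ p) ζ (Vd ξ) =
      p ^ 2 / 2 * ‖ζ‖ ^ (p - 2) *
        (@inner ℂ _ _
          (mulVecE A (Complex.exp (-((((ζ 0 : ℂ) + (ζ 1 : ℂ) * Complex.I).arg : ℂ)) * Complex.I) • ξ))
          (Ip p (Complex.exp (-((((ζ 0 : ℂ) + (ζ 1 : ℂ) * Complex.I).arg : ℂ)) * Complex.I) • ξ))).re := by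
  have hp0 : p ≠ 0 := by linarith
  have hr : (0:ℝ) < ‖ζ‖ := norm_pos_iff.mpr hζ
  have hr0 : ‖ζ‖ ≠ 0 := ne_of_gt hr
  set r := ‖ζ‖ with hrdef
  set z : ℂ := (ζ 0 : ℂ) + (ζ 1 : ℂ) * Complex.I with hzdef
  have hr2 : r ^ 2 = ζ 0 ^ 2 + ζ 1 ^ 2 := by
    rw [hrdef, EuclideanSpace.norm_eq, Real.sq_sqrt (by positivity)]
    simp [Fin.sum_univ_two, Real.norm_eq_abs, sq_abs]
  have habs : ‖z‖ = r := by
    rw [hzdef, Complex.norm_def, Complex.normSq_add_mul_I, ← hr2]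
    exact Real.sqrt_sq hr.le
  have hz0 : z ≠ 0 := fun h => hr0 (by rw [h, norm_zero] at habs; exact habs.symm)
  have hrC : ((r:ℝ):ℂ) ≠ 0 := by exact_mod_cast hr0
  have he : Complex.exp (-((z.arg : ℂ)) * Complex.I) = conj z / (r:ℂ) := by
    have h1 : Complex.exp ((z.arg : ℂ) * Complex.I) = z / (r:ℂ) := by
      rw [eq_div_iff hrC, mul_comm]
      rw [← habs]; exact_mod_cast Complex.norm_mul_exp_arg_mul_I z
    rw [neg_mul, Complex.exp_neg, h1, inv_div, div_eq_div_iff hz0 hrC,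
      Complex.conj_mul', habs]
    push_cast; ring
  rw [he]
  set e : ℂ := conj z / (r:ℂ) with hedef
  set W : Fin d → ℂ := fun n => ∑ j, A n j * ξ j with hWdef
  have hmv : ∀ n, mulVecE A (e • ξ) n = e * W n := by
    intro n
    simp only [mulVecE, PiLp.smul_apply, smul_eq_mul, hWdef, Finset.mul_sum]
    exact Finset.sum_congr rfl fun j _ => by ring
  have hIp : ∀ n, Ip p (e • ξ) n = e * ξ n + ((1 - 2/p : ℝ):ℂ) * conj (e * ξ n) := by
    intro n; simp [Ip, PiLp.smul_apply, smul_eq_mul]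
  rw [PiLp.inner_apply]
  simp only [RCLike.inner_apply, hmv, hIp]
  rw [Complex.re_sum, Finset.mul_sum]
  have L1 : genHess1 A (fun w => ‖w‖ ^ p) ζ (Vd ξ) = ∑ n,
      (p*(p-2)*r^(p-4) * (ζ 0 * (W n).re + ζ 1 * (W n).im) * (ζ 0 * (ξ n).re + ζ 1 * (ξ n).im)
        + p*r^(p-2) * ((W n).re * (ξ n).re + (W n).im * (ξ n).im)) := by
    have hWre : ∀ n, (W n).re = ∑ m, ((A n m).re * (ξ m).re - (A n m).im * (ξ m).im) := by
      intro n
      simp only [hWdef, Complex.re_sum]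
      exact Finset.sum_congr rfl fun m _ => Complex.mul_re _ _
    have hWim : ∀ n, (W n).im = ∑ m, ((A n m).re * (ξ m).im + (A n m).im * (ξ m).re) := by
      intro n
      simp only [hWdef, Complex.im_sum]
      exact Finset.sum_congr rfl fun m _ => Complex.mul_im _ _
    have h01 : ¬ ((0:Fin 2) = 1) := by decide
    have h10 : ¬ ((1:Fin 2) = 0) := by decide
    rw [genHess1]
    simp only [hessF hp ζ hζ, Fin.sum_univ_two, realForm, Matrix.conjTranspose_apply, Vd]
    simp only [Fin.isValue, reduceIte, if_neg h01, if_neg h10, if_pos rfl, RCLike.star_def, Complex.conj_re,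
      Complex.conj_im, mul_zero, mul_one, add_zero]
    simp only [← hrdef]
    trans (∑ m, ∑ n, (p*(p-2)*r^(p-4) *
        (ζ 0 * ((A n m).re * (ξ m).re - (A n m).im * (ξ m).im)
          + ζ 1 * ((A n m).re * (ξ m).im + (A n m).im * (ξ m).re))
        * (ζ 0 * (ξ n).re + ζ 1 * (ξ n).im)
      + p*r^(p-2) * (((A n m).re * (ξ m).re - (A n m).im * (ξ m).im) * (ξ n).re
          + ((A n m).re * (ξ m).im + (A n m).im * (ξ m).re) * (ξ n).im)))
    · rw [← Finset.sum_add_distrib]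
      refine Finset.sum_congr rfl fun m _ => ?_
      simp only [add_mul, Finset.sum_mul, ← Finset.sum_add_distrib]
      exact Finset.sum_congr rfl fun n _ => by ring
    · rw [Finset.sum_comm]
      refine Finset.sum_congr rfl fun n _ => ?_
      rw [hWre n, hWim n]
      simp only [mul_add, add_mul, Finset.mul_sum, Finset.sum_mul, ← Finset.sum_add_distrib]
  rw [L1]
  refine Finset.sum_congr rfl fun n _ => ?_
  have h2 : conj e * e = 1 := by
    rw [hedef, map_div₀, Complex.conj_conj, Complex.conj_ofReal, div_mul_div_comm,
      mul_comm z, Complex.conj_mul', habs]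
    push_cast
    rw [sq]
    exact div_self (mul_ne_zero hrC hrC)
  have h3 : conj e * conj e = z^2 / (r:ℂ)^2 := by
    rw [hedef, map_div₀, Complex.conj_conj, Complex.conj_ofReal, div_mul_div_comm, ← sq, ← sq]
  have hcc : conj (e * W n) * (e * ξ n + ((1 - 2/p : ℝ):ℂ) * conj (e * ξ n))
      = conj (W n) * ξ n + ((1 - 2/p : ℝ):ℂ) * (z^2 / (r:ℂ)^2) * (conj (W n) * conj (ξ n)) := by
    calc conj (e * W n) * (e * ξ n + ((1 - 2/p : ℝ):ℂ) * conj (e * ξ n))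
        = (conj e * e) * (conj (W n) * ξ n)
          + ((1 - 2/p : ℝ):ℂ) * (conj e * conj e) * (conj (W n) * conj (ξ n)) := by
          simp only [map_mul]; ring
      _ = _ := by rw [h2, h3]; ring
  rw [mul_comm (e * ξ n + _), hcc]
  have hre : (conj (W n) * ξ n + ((1 - 2/p : ℝ):ℂ) * (z^2 / (r:ℂ)^2) * (conj (W n) * conj (ξ n))).re
      = (conj (W n) * ξ n).re + (1 - 2/p) * ((z^2 * (conj (W n) * conj (ξ n))).re / r^2) := by
    rw [Complex.add_re, mul_assoc, Complex.re_ofReal_mul, div_mul_eq_mul_div,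
      ← Complex.ofReal_pow, Complex.div_ofReal_re]
  rw [hre]
  have hpow : r ^ (p-2) = r ^ (p-4) * r^2 := by
    rw [← Real.rpow_natCast r 2, ← Real.rpow_add hr]
    congr 1
    push_cast; ring
  have hne : ζ 0^2 + ζ 1^2 ≠ 0 := by rw [← hr2]; positivity
  have hz2re : (z^2).re = ζ 0^2 - ζ 1^2 := by
    rw [hzdef]
    simp only [pow_two, Complex.mul_re, Complex.add_re, Complex.add_im, Complex.mul_im,
      Complex.ofReal_re, Complex.ofReal_im, Complex.I_re, Complex.I_im]
    ring
  have hz2im : (z^2).im = 2 * (ζ 0 * ζ 1) := by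
    rw [hzdef]
    simp only [pow_two, Complex.mul_re, Complex.add_re, Complex.add_im, Complex.mul_im,
      Complex.ofReal_re, Complex.ofReal_im, Complex.I_re, Complex.I_im]
    ring
  simp only [Complex.mul_re, Complex.mul_im, Complex.conj_re, Complex.conj_im,
    hz2re, hz2im]
  rw [hpow, hr2]
  field_simp
  ring
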